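/- arXiv:2002.08825 — 6 statements merged into one kernel-verified Lean document; each statement's English description precedes it below -/
import Mathlib

section
/- Let (G,T) be a terminal network and let G' be a finite simple undirected graph with T ⊆ V(G'). Then G' is a multicut-mimicking network for (G,T) — that is, for every set of cut requests R ⊆ {{u,v} : u,v ∈ T, u≠v}, the minimum cardinality of a multicut for R is the same in G and in G' — if and only if for every partition 𝒯 of T, the minimum cardinality of a multiway cut for 𝒯 is the same in G and in G'. -/
open Finset

variable {V : Type}

/-- Total capacity of a terminal set: sum of degrees. -/
def capacity [Fintype V] (G : SimpleGraph V) [DecidableRel G.Adj] (T : Finset V) : ℕ :=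
  ∑ t ∈ T, G.degree t

/-- `P` is a partition of the set `T` into nonempty parts. -/
def IsPartitionOn (T : Set V) (P : Set (Set V)) : Prop :=
  (∀ p ∈ P, p.Nonempty ∧ p ⊆ T) ∧ ∀ t ∈ T, ∃! p, p ∈ P ∧ t ∈ p

/-- `X` is a multiway cut for the partition `P` in `G`: no component of `G - X`
contains terminals from two distinct parts. -/
def IsMultiwayCut (G : SimpleGraph V) (P : Set (Set V)) (X : Finset (Sym2 V)) : Prop :=
  ↑X ⊆ G.edgeSet ∧ ∀ u v : V, ∀ p ∈ P, ∀ q ∈ P, u ∈ p → v ∈ q →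
    (G.deleteEdges ↑X).Reachable u v → p = q

def IsMinMultiwayCut (G : SimpleGraph V) (P : Set (Set V)) (X : Finset (Sym2 V)) : Prop :=
  IsMultiwayCut G P X ∧ ∀ Y : Finset (Sym2 V), IsMultiwayCut G P Y → X.card ≤ Y.card

/-- `R` is a set of cut requests over `T`: unordered pairs of distinct terminals. -/
def CutRequests (T : Set V) (R : Set (Sym2 V)) : Prop :=
  ∀ r ∈ R, ¬ r.IsDiag ∧ ∀ v ∈ r, v ∈ T

/-- `X` is a multicut for the requests `R` in `G`. -/
def IsMulticut (G : SimpleGraph V) (R : Set (Sym2 V)) (X : Finset (Sym2 V)) : Prop :=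
  ↑X ⊆ G.edgeSet ∧ ∀ u v : V, s(u, v) ∈ R → ¬ (G.deleteEdges ↑X).Reachable u v

def IsMinMulticut (G : SimpleGraph V) (R : Set (Sym2 V)) (X : Finset (Sym2 V)) : Prop :=
  IsMulticut G R X ∧ ∀ Y : Finset (Sym2 V), IsMulticut G R Y → X.card ≤ Y.card

/-- An edge is essential for `(G,T)` if for some set of cut requests over `T`,
every minimum multicut contains it. -/
def Essential (G : SimpleGraph V) (T : Set V) (e : Sym2 V) : Prop :=
  ∃ R : Set (Sym2 V), CutRequests T R ∧ ∀ X : Finset (Sym2 V), IsMinMulticut G R X → e ∈ X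

/-- The edge boundary of `S`: edges with exactly one endpoint in `S`. -/
def edgeBoundary [Fintype V] [DecidableEq V] (G : SimpleGraph V) [DecidableRel G.Adj]
    (S : Finset V) : Finset (Sym2 V) :=
  G.edgeFinset.filter (fun e => ∃ u v : V, e = s(u, v) ∧ u ∈ S ∧ v ∉ S)

/-- `cap_T(S) = cap_G(T ∩ S) + δ_G(S)`. -/
def capT [Fintype V] [DecidableEq V] (G : SimpleGraph V) [DecidableRel G.Adj]
    (T S : Finset V) : ℕ :=
  capacity G (T ∩ S) + (edgeBoundary G S).card

/-- `X` is an `(A,B)`-edge cut in `G`. -/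
def IsEdgeCut (G : SimpleGraph V) (A B : Finset V) (X : Finset (Sym2 V)) : Prop :=
  ↑X ⊆ G.edgeSet ∧ ∀ a ∈ A, ∀ b ∈ B, ¬ (G.deleteEdges ↑X).Reachable a b

def IsMinEdgeCut (G : SimpleGraph V) (A B : Finset V) (X : Finset (Sym2 V)) : Prop :=
  IsEdgeCut G A B X ∧ ∀ Y : Finset (Sym2 V), IsEdgeCut G A B Y → X.card ≤ Y.card


/-- The closed neighborhood `N_G[S]`. -/
def closedNbhd (G : SimpleGraph V) (S : Set V) : Set V :=
  S ∪ {v | ∃ u ∈ S, G.Adj u v}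

/-- The (exterior) open neighborhood `N_G(S)`. -/
def extNbhd [Fintype V] [DecidableEq V] (G : SimpleGraph V) [DecidableRel G.Adj]
    (S : Finset V) : Finset V :=
  Finset.univ.filter (fun v => v ∉ S ∧ ∃ u ∈ S, G.Adj u v)

/-- The graph `G_S`: the edges of `G` with at least one endpoint in `S`
(vertices outside `N_G[S]` are isolated). -/
def recGraph [DecidableEq V] (G : SimpleGraph V) (S : Finset V) : SimpleGraph V where
  Adj u v := G.Adj u v ∧ (u ∈ S ∨ v ∈ S)
  symm := ⟨fun u v h => ⟨h.1.symm, h.2.symm⟩⟩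
  loopless := ⟨fun v h => G.loopless.irrefl v h.1⟩

instance [DecidableEq V] (G : SimpleGraph V) [DecidableRel G.Adj] (S : Finset V) :
    DecidableRel (recGraph G S).Adj :=
  fun u v => inferInstanceAs (Decidable (G.Adj u v ∧ (u ∈ S ∨ v ∈ S)))

/-- The terminal set `T(S) = (T ∩ S) ∪ N_G(S)` of the recursive instance at `S`. -/
def recTerminals [Fintype V] [DecidableEq V] (G : SimpleGraph V) [DecidableRel G.Adj]
    (T S : Finset V) : Finset V :=
  (T ∩ S) ∪ extNbhd G S

/-- An indexed partition `T = T_1 ∪ ... ∪ T_s` of `T` into nonempty disjoint parts. -/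
def IsIndexedPartition [DecidableEq V] (T : Finset V) {s : ℕ} (Tp : Fin s → Finset V) : Prop :=
  (∀ i, (Tp i).Nonempty) ∧ (∀ i j, i ≠ j → Disjoint (Tp i) (Tp j)) ∧
    Finset.univ.biUnion Tp = T

def IsMultiwayCutFam (G : SimpleGraph V) {s : ℕ} (Tp : Fin s → Finset V)
    (X : Finset (Sym2 V)) : Prop :=
  ↑X ⊆ G.edgeSet ∧ ∀ i j : Fin s, i ≠ j → ∀ u ∈ Tp i, ∀ v ∈ Tp j,
    ¬ (G.deleteEdges ↑X).Reachable u v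

/-- The set `E(T,V)` of edges incident to at least one terminal. -/
def terminalEdges [Fintype V] [DecidableEq V] (G : SimpleGraph V) [DecidableRel G.Adj]
    (T : Finset V) : Finset (Sym2 V) :=
  G.edgeFinset.filter (fun e => ∃ t ∈ T, t ∈ e)

/-- Independence of the columns indexed by the finite set `X` in the
linear representation `v`. -/
def FIndep (F : Type) [Field F] {W E : Type} [AddCommGroup W] [Module F W]
    (v : E → W) (X : Finset E) : Prop :=
  LinearIndependent F (fun x : {a // a ∈ X} => v x.1)


variable {τ V' : Type}

/-- The minimum cardinality of a multicut in `G` for the cut requests `R` over the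
terminal type `τ`, where terminals are embedded in `G` via `f`. -/
noncomputable def minMulticutSizeOn (G : SimpleGraph V) (f : τ → V) (R : Set (Sym2 τ)) : ℕ :=
  sInf {n : ℕ | ∃ X : Finset (Sym2 V),
    (↑X ⊆ G.edgeSet ∧
      ∀ a b : τ, s(a, b) ∈ R → ¬ (G.deleteEdges ↑X).Reachable (f a) (f b)) ∧ X.card = n}

/-- The minimum cardinality of a multiway cut in `G` for the partition `P` of the
terminal type `τ`, where terminals are embedded in `G` via `f`. -/
noncomputable def minMultiwayCutSizeOn (G : SimpleGraph V) (f : τ → V) (P : Set (Set τ)) : ℕ :=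
  sInf {n : ℕ | ∃ X : Finset (Sym2 V),
    (↑X ⊆ G.edgeSet ∧
      ∀ a b : τ, ∀ p ∈ P, ∀ q ∈ P, a ∈ p → b ∈ q →
        (G.deleteEdges ↑X).Reachable (f a) (f b) → p = q) ∧ X.card = n}


section MimickingAux

variable {W : Type}

/-- Deleting all edges makes every pair of distinct vertices unreachable. -/
lemma trivialCutAux [Fintype W] (H : SimpleGraph W) :
    ∃ X : Finset (Sym2 W), ↑X ⊆ H.edgeSet ∧
      ∀ u v : W, (H.deleteEdges ↑X).Reachable u v → u = v := by
  refine ⟨(Set.toFinite H.edgeSet).toFinset, by simp, fun u v h => ?_⟩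
  rw [Set.Finite.coe_toFinset] at h
  have hb : H.deleteEdges H.edgeSet = ⊥ := by
    rw [SimpleGraph.deleteEdges_edgeSet, sdiff_self]
  rw [hb] at h
  exact SimpleGraph.reachable_bot.mp h

/-- Nonemptiness of the multiway-cut size set, for any partition. -/
lemma multiwaySetNonempty [Fintype W] (H : SimpleGraph W) (g : τ → W)
    (hg : Function.Injective g) (P : Set (Set τ)) (hP : Setoid.IsPartition P) :
    {n : ℕ | ∃ X : Finset (Sym2 W),
      (↑X ⊆ H.edgeSet ∧
        ∀ a b : τ, ∀ p ∈ P, ∀ q ∈ P, a ∈ p → b ∈ q →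
          (H.deleteEdges ↑X).Reachable (g a) (g b) → p = q) ∧ X.card = n}.Nonempty := by
  obtain ⟨X, hX1, hX2⟩ := trivialCutAux H
  refine ⟨X.card, X, ⟨hX1, fun a b p hp q hq hap hbq hr => ?_⟩, rfl⟩
  have hab : a = b := hg (hX2 _ _ hr)
  subst hab
  exact (hP.2 a).unique ⟨hp, hap⟩ ⟨hq, hbq⟩

/-- Nonemptiness of the multicut size set, for diag-free requests. -/
lemma multicutSetNonempty [Fintype W] (H : SimpleGraph W) (g : τ → W)
    (hg : Function.Injective g) (R : Set (Sym2 τ)) (hR : ∀ r ∈ R, ¬ r.IsDiag) :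
    {n : ℕ | ∃ X : Finset (Sym2 W),
      (↑X ⊆ H.edgeSet ∧
        ∀ a b : τ, s(a, b) ∈ R → ¬ (H.deleteEdges ↑X).Reachable (g a) (g b)) ∧
      X.card = n}.Nonempty := by
  obtain ⟨X, hX1, hX2⟩ := trivialCutAux H
  refine ⟨X.card, X, ⟨hX1, fun a b hab hr => ?_⟩, rfl⟩
  exact (hR _ hab) (Sym2.mk_isDiag_iff.mpr (hg (hX2 _ _ hr)))

/-- For the request set of all cross-part pairs of a partition `P`, a multicut
is the same thing as a multiway cut, hence the minimum sizes coincide. -/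
lemma multicut_eq_multiwayAux [Fintype W] (H : SimpleGraph W) (g : τ → W)
    (P : Set (Set τ)) :
    minMulticutSizeOn H g
        {x : Sym2 τ | ∃ a b : τ, ∃ p q : Set τ,
          x = s(a, b) ∧ p ∈ P ∧ q ∈ P ∧ p ≠ q ∧ a ∈ p ∧ b ∈ q}
      = minMultiwayCutSizeOn H g P := by
  unfold minMulticutSizeOn minMultiwayCutSizeOn
  congr 1
  ext n
  constructor
  · rintro ⟨X, ⟨hX1, hX2⟩, hXc⟩
    refine ⟨X, ⟨hX1, fun a b p hp q hq hap hbq hr => ?_⟩, hXc⟩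
    by_contra hpq
    exact hX2 a b ⟨a, b, p, q, rfl, hp, hq, hpq, hap, hbq⟩ hr
  · rintro ⟨X, ⟨hX1, hX2⟩, hXc⟩
    refine ⟨X, ⟨hX1, fun a b hab hr => ?_⟩, hXc⟩
    obtain ⟨a', b', p, q, heq, hp, hq, hpq, ha', hb'⟩ := hab
    rcases Sym2.eq_iff.mp heq with ⟨rfl, rfl⟩ | ⟨rfl, rfl⟩
    · exact hpq (hX2 a b p hp q hq ha' hb' hr)
    · exact hpq (hX2 b a p hp q hq ha' hb' hr.symm)

/-- One-sided inequality: if minimum multiway-cut sizes agree on all partitions,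
then the minimum multicut size in `G'` is at most that in `G`. -/
lemma multicut_leAux {V V' : Type} [Fintype V] [Fintype V']
    (G : SimpleGraph V) (G' : SimpleGraph V') (f : τ → V) (f' : τ → V')
    (hf : Function.Injective f) (hf' : Function.Injective f')
    (h : ∀ P : Set (Set τ), Setoid.IsPartition P →
        minMultiwayCutSizeOn G f P = minMultiwayCutSizeOn G' f' P)
    (R : Set (Sym2 τ)) (hR : ∀ r ∈ R, ¬ r.IsDiag) :
    minMulticutSizeOn G' f' R ≤ minMulticutSizeOn G f R := by
  obtain ⟨X, ⟨hX1, hX2⟩, hXcard⟩ := Nat.sInf_mem (multicutSetNonempty G f hf R hR)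
  set r : Setoid τ :=
    ⟨fun a b => (G.deleteEdges ↑X).Reachable (f a) (f b),
      ⟨fun a => SimpleGraph.Reachable.refl _, fun h => h.symm, fun h1 h2 => h1.trans h2⟩⟩
  have hP : Setoid.IsPartition r.classes := Setoid.isPartition_classes r
  have h1 : minMultiwayCutSizeOn G f r.classes ≤ X.card := by
    refine Nat.sInf_le ⟨X, ⟨hX1, fun a b p hp q hq hap hbq hr => ?_⟩, rfl⟩
    obtain ⟨c, rfl⟩ := hq
    have hac : r a c := r.trans' hr hbq
    exact Setoid.eq_of_mem_classes hp hap (r.mem_classes c) hac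
  obtain ⟨Y, ⟨hY1, hY2⟩, hYcard⟩ :=
    Nat.sInf_mem (multiwaySetNonempty G' f' hf' r.classes hP)
  have h2 : minMulticutSizeOn G' f' R ≤ Y.card := by
    refine Nat.sInf_le ⟨Y, ⟨hY1, fun a b hab hreach => ?_⟩, rfl⟩
    have hpq : ({x | r x a} : Set τ) = {x | r x b} :=
      hY2 a b _ (r.mem_classes a) _ (r.mem_classes b) (r.refl' a) (r.refl' b) hreach
    have hrab : r a b := by
      have : a ∈ ({x | r x b} : Set τ) := hpq ▸ (r.refl' a)
      exact this
    exact hX2 a b hab hrab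
  calc minMulticutSizeOn G' f' R ≤ Y.card := h2
    _ = minMultiwayCutSizeOn G' f' r.classes := hYcard
    _ = minMultiwayCutSizeOn G f r.classes := (h _ hP).symm
    _ ≤ X.card := h1
    _ = minMulticutSizeOn G f R := hXcard

end MimickingAux

/-- `G'` is a multicut-mimicking network for `(G,T)` (the minimum
multicut size agrees for every set of cut requests over `T`) iff the minimum multiway
cut size agrees for every partition of `T`.  The common terminal set `T` is modelled
by a type `τ` embedded injectively in both graphs. -/
theorem multicut_mimicking_iff_multiway_mimicking
    [Fintype V] [Fintype V'] [Fintype τ]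
    (G : SimpleGraph V) (G' : SimpleGraph V')
    (f : τ → V) (f' : τ → V')
    (hf : Function.Injective f) (hf' : Function.Injective f') :
    (∀ R : Set (Sym2 τ), (∀ r ∈ R, ¬ r.IsDiag) →
        minMulticutSizeOn G f R = minMulticutSizeOn G' f' R) ↔
    (∀ P : Set (Set τ), Setoid.IsPartition P →
        minMultiwayCutSizeOn G f P = minMultiwayCutSizeOn G' f' P) :=  by
  constructor
  · intro h P hP
    set R : Set (Sym2 τ) :=
      {x : Sym2 τ | ∃ a b : τ, ∃ p q : Set τ,
        x = s(a, b) ∧ p ∈ P ∧ q ∈ P ∧ p ≠ q ∧ a ∈ p ∧ b ∈ q} with hRdef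
    have hR : ∀ x ∈ R, ¬ x.IsDiag := by
      rintro x ⟨a, b, p, q, rfl, hp, hq, hpq, hap, hbq⟩ hd
      have hab : a = b := Sym2.mk_isDiag_iff.mp hd
      subst hab
      exact hpq ((hP.2 a).unique ⟨hp, hap⟩ ⟨hq, hbq⟩)
    calc minMultiwayCutSizeOn G f P
        = minMulticutSizeOn G f R := (multicut_eq_multiwayAux G f P).symm
      _ = minMulticutSizeOn G' f' R := h R hR
      _ = minMultiwayCutSizeOn G' f' P := multicut_eq_multiwayAux G' f' P
  · intro h R hR
    exact le_antisymm
      (multicut_leAux G' G f' f hf' hf (fun P hP => (h P hP).symm) R hR)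
      (multicut_leAux G G' f f' hf hf' (fun P hP => h P hP) R hR)
end

section
/- Let (G,T) be a terminal network and let Z ⊆ E(G) be a cut-covering set for (G,T). Then Z is a 2-approximate multicut-covering set: for every partition 𝒯 of T there exists a multiway cut X' for 𝒯 in G with X' ⊆ Z and |X'| ≤ 2·|X|, where X is a minimum multiway cut for 𝒯 in G. -/
open Finset

variable {V : Type}

/-- `Z` is a cut-covering set for `(G,T)`: for every bipartition `T = A ∪ B` there is
a minimum `(A,B)`-edge cut contained in `Z`. -/
def CutCovering [Fintype V] [DecidableEq V] (G : SimpleGraph V) (T : Finset V)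
    (Z : Finset (Sym2 V)) : Prop :=
  ↑Z ⊆ G.edgeSet ∧ ∀ A B : Finset V, A ∪ B = T → Disjoint A B →
    ∃ X : Finset (Sym2 V), IsMinEdgeCut G A B X ∧ X ⊆ Z

/-- A cut-covering set `Z` for `(G,T)` is a 2-approximate
multicut-covering set: for every partition `𝒯` of `T` and minimum multiway cut `X`
for `𝒯`, there is a multiway cut `X' ⊆ Z` for `𝒯` with `|X'| ≤ 2·|X|`. -/
theorem cutCovering_is_two_approx_multicutCovering [Fintype V] [DecidableEq V]
    (G : SimpleGraph V) (T : Finset V) (Z : Finset (Sym2 V))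
    (hZ : CutCovering G T Z) :
    ∀ P : Set (Set V), IsPartitionOn (↑T) P →
      ∀ X : Finset (Sym2 V), IsMinMultiwayCut G P X →
        ∃ X' : Finset (Sym2 V), IsMultiwayCut G P X' ∧ X' ⊆ Z ∧ X'.card ≤ 2 * X.card := by
    classical
  intro P hP X hX
  obtain ⟨hXmw, _hXmin⟩ := hX
  obtain ⟨hXE, hXsep⟩ := hXmw
  -- uniqueness of parts
  have huniq : ∀ p ∈ P, ∀ q ∈ P, ∀ w : V, w ∈ p → w ∈ q → p = q := by
    intro p hp q hq w hwp hwq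
    have hwT : w ∈ (↑T : Set V) := (hP.1 p hp).2 hwp
    obtain ⟨r, _, hr⟩ := hP.2 w hwT
    rw [hr p ⟨hp, hwp⟩, hr q ⟨hq, hwq⟩]
  have hPfin : P.Finite :=
    Set.Finite.subset T.finite_toSet.finite_subsets (fun p hp => (hP.1 p hp).2)
  set PF : Finset (Set V) := hPfin.toFinset with hPF
  -- the bipartitions
  set A : Set V → Finset V := fun p => T.filter (fun t => t ∈ p) with hA
  set B : Set V → Finset V := fun p => T.filter (fun t => t ∉ p) with hB
  have hchoice : ∀ p ∈ P,
      ∃ Y : Finset (Sym2 V), IsMinEdgeCut G (A p) (B p) Y ∧ Y ⊆ Z := by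
    intro p _
    refine hZ.2 (A p) (B p) (Finset.filter_union_filter_not_eq _ T) ?_
    simp only [Finset.disjoint_left, hA, hB, Finset.mem_filter]
    tauto
  set f : Set V → Finset (Sym2 V) :=
    fun p => if h : p ∈ P then (hchoice p h).choose else ∅ with hf
  have hfcut : ∀ p (h : p ∈ P), IsMinEdgeCut G (A p) (B p) (f p) ∧ f p ⊆ Z := by
    intro p h
    simp only [hf, dif_pos h]
    exact (hchoice p h).choose_spec
  set X' : Finset (Sym2 V) := PF.biUnion f with hX'
  have hmemPF : ∀ p, p ∈ PF ↔ p ∈ P := fun p => hPfin.mem_toFinset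
  have hX'Z : X' ⊆ Z := by
    intro e he
    obtain ⟨p, hp, hpe⟩ := Finset.mem_biUnion.mp he
    exact (hfcut p ((hmemPF p).mp hp)).2 hpe
  have hfX' : ∀ p ∈ P, f p ⊆ X' := by
    intro p hp e he
    exact Finset.mem_biUnion.mpr ⟨p, (hmemPF p).mpr hp, he⟩
  -- reachable sets in G - X
  set S : Set V → Set V :=
    fun p => {w | ∃ a ∈ A p, (G.deleteEdges ↑X).Reachable a w} with hS
  have hSdisj : ∀ p ∈ P, ∀ q ∈ P, ∀ w : V, w ∈ S p → w ∈ S q → p = q := by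
    intro p hp q hq w ⟨a, ha, hra⟩ ⟨b, hb, hrb⟩
    have ha' := Finset.mem_filter.mp ha
    have hb' := Finset.mem_filter.mp hb
    exact hXsep a b p hp q hq ha'.2 hb'.2 (hra.trans hrb.symm)
  -- boundary cuts
  set D : Set V → Finset (Sym2 V) :=
    fun p => X.filter (fun e => ∃ u v : V, e = s(u, v) ∧ u ∈ S p ∧ v ∉ S p) with hD
  have hDcut : ∀ p ∈ P, IsEdgeCut G (A p) (B p) (D p) := by
    intro p hp
    constructor
    · exact fun e he => hXE (Finset.mem_coe.mpr (Finset.mem_filter.mp he).1)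
    · intro a ha b hb hreach
      have ha' := Finset.mem_filter.mp ha
      have hb' := Finset.mem_filter.mp hb
      have haS : a ∈ S p := ⟨a, ha, SimpleGraph.Reachable.refl a⟩
      have hbS : b ∉ S p := by
        rintro ⟨a', ha', hrb⟩
        have ha'' := Finset.mem_filter.mp ha'
        obtain ⟨q, hq, hbq⟩ := hP.2 b (hb'.1)
        have := hXsep a' b p hp q hq.1 ha''.2 hq.2 hrb
        exact hb'.2 (this ▸ hq.2)
      obtain ⟨w⟩ := hreach
      obtain ⟨d, _, hdS, hdS'⟩ := w.exists_boundary_dart (S p) haS hbS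
      have hadj := d.adj
      rw [SimpleGraph.deleteEdges_adj] at hadj
      by_cases hin : s(d.fst, d.snd) ∈ X
      · exact hadj.2 (Finset.mem_coe.mpr (Finset.mem_filter.mpr
          ⟨hin, d.fst, d.snd, rfl, hdS, hdS'⟩))
      · obtain ⟨a', ha', hra'⟩ := hdS
        refine hdS' ⟨a', ha', hra'.trans (SimpleGraph.Adj.reachable ?_)⟩
        rw [SimpleGraph.deleteEdges_adj]
        exact ⟨hadj.1, hin⟩
  have hfD : ∀ p ∈ P, (f p).card ≤ (D p).card := by
    intro p hp
    exact (hfcut p hp).1.2 (D p) (hDcut p hp)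
  refine ⟨X', ⟨?_, ?_⟩, hX'Z, ?_⟩
  · exact fun e he => hZ.1 (hX'Z he)
  · intro u v p hp q hq hup hvq hreach
    by_contra hne
    have huA : u ∈ A p := Finset.mem_filter.mpr ⟨(hP.1 p hp).2 hup, hup⟩
    have hvB : v ∈ B p := by
      refine Finset.mem_filter.mpr ⟨(hP.1 q hq).2 hvq, fun hvp => ?_⟩
      exact hne (huniq p hp q hq v hvp hvq)
    have hreach' : (G.deleteEdges ↑(f p)).Reachable u v := by
      refine hreach.mono (SimpleGraph.deleteEdges_anti ?_)
      exact fun e he => Finset.mem_coe.mpr (hfX' p hp (Finset.mem_coe.mp he))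
    exact (hfcut p hp).1.1.2 u huA v hvB hreach'
  · calc X'.card ≤ ∑ p ∈ PF, (f p).card := Finset.card_biUnion_le
      _ ≤ ∑ p ∈ PF, (D p).card :=
          Finset.sum_le_sum (fun p hp => hfD p ((hmemPF p).mp hp))
      _ = ∑ p ∈ PF, ∑ e ∈ X,
            (if ∃ u v : V, e = s(u, v) ∧ u ∈ S p ∧ v ∉ S p then 1 else 0) := by
          refine Finset.sum_congr rfl (fun p _ => ?_)
          rw [hD, Finset.card_filter]
      _ = ∑ e ∈ X, ∑ p ∈ PF,
            (if ∃ u v : V, e = s(u, v) ∧ u ∈ S p ∧ v ∉ S p then 1 else 0) :=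
          Finset.sum_comm
      _ ≤ ∑ _e ∈ X, 2 := by
          refine Finset.sum_le_sum (fun e _ => ?_)
          rw [← Finset.card_filter]
          induction e using Sym2.ind with
          | _ a b =>
            have hsub : PF.filter
                (fun p => ∃ u v : V, s(a, b) = s(u, v) ∧ u ∈ S p ∧ v ∉ S p) ⊆
                PF.filter (fun p => a ∈ S p) ∪ PF.filter (fun p => b ∈ S p) := by
              intro p hp
              obtain ⟨hpPF, u, v, heq, huS, hvS⟩ := Finset.mem_filter.mp hp
              rw [Sym2.eq_iff] at heq
              rcases heq with ⟨rfl, rfl⟩ | ⟨rfl, rfl⟩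
              · exact Finset.mem_union_left _ (Finset.mem_filter.mpr ⟨hpPF, huS⟩)
              · exact Finset.mem_union_right _ (Finset.mem_filter.mpr ⟨hpPF, huS⟩)
            have h1 : ∀ w : V, (PF.filter (fun p => w ∈ S p)).card ≤ 1 := by
              intro w
              refine Finset.card_le_one.mpr (fun p hp q hq => ?_)
              obtain ⟨hpPF, hwp⟩ := Finset.mem_filter.mp hp
              obtain ⟨hqPF, hwq⟩ := Finset.mem_filter.mp hq
              exact hSdisj p ((hmemPF p).mp hpPF) q ((hmemPF q).mp hqPF) w hwp hwq
            calc _ ≤ (PF.filter (fun p => a ∈ S p) ∪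
                      PF.filter (fun p => b ∈ S p)).card := Finset.card_le_card hsub
              _ ≤ (PF.filter (fun p => a ∈ S p)).card +
                  (PF.filter (fun p => b ∈ S p)).card := Finset.card_union_le _ _
              _ ≤ 2 := by have := h1 a; have := h1 b; omega
      _ = 2 * X.card := by rw [Finset.sum_const, smul_eq_mul, mul_comm]
end

section
/- Let (G,T) be a terminal network, let S ⊆ V(G), and let (G_S, T(S)) be the recursive instance at S. Let Z_S ⊆ E(G_S) be a multicut-covering set for (G_S, T(S)), and let e ∈ E(G_S) ∖ Z_S. Then e is not essential for (G,T): for every set of cut requests R ⊆ {{u,v} : u,v ∈ T, u≠v} there exists a minimum multicut X for R in G with e ∉ X. -/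
open Finset

variable {V : Type}

/-- `Z` is a multicut-covering set for `(G,T)`. -/
def MulticutCovering [Fintype V] (G : SimpleGraph V) (T : Finset V)
    (Z : Finset (Sym2 V)) : Prop :=
  ↑Z ⊆ G.edgeSet ∧ ∀ R : Set (Sym2 V), CutRequests (↑T) R →
    ∃ X : Finset (Sym2 V), IsMinMulticut G R X ∧ X ⊆ Z

/-- If `Z_S` is a multicut-covering set for the recursive instance
`(G_S, T(S))` at `S` and `e ∈ E(G_S) ∖ Z_S`, then `e` is not essential for `(G,T)`:
for every set of cut requests `R` over `T` there is a minimum multicut avoiding `e`. -/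
theorem recursive_instance_nonessential [Fintype V] [DecidableEq V]
    (G : SimpleGraph V) [DecidableRel G.Adj] (T S : Finset V)
    (ZS : Finset (Sym2 V))
    (hZ : MulticutCovering (recGraph G S) (recTerminals G T S) ZS)
    (e : Sym2 V) (he : e ∈ (recGraph G S).edgeSet) (heZ : e ∉ ZS) :
    ∀ R : Set (Sym2 V), CutRequests (↑T) R →
      ∃ X : Finset (Sym2 V), IsMinMulticut G R X ∧ e ∉ X := by
  intro R hR
  classical
  set GS := recGraph G S with hGSdef
  set TS := recTerminals G T S with hTSdef
  -- a minimum multicut for R in G exists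
  have hmc0 : IsMulticut G R G.edgeFinset := by
    constructor
    · simp
    · intro u v hr hreach
      have huv : u ≠ v := fun h => (hR _ hr).1 (by simp [h])
      have hbot : G.deleteEdges ↑G.edgeFinset = ⊥ := by
        ext a b
        simp [SimpleGraph.deleteEdges_adj]
      rw [hbot, SimpleGraph.reachable_bot] at hreach
      exact huv hreach
  have hMne : Set.Nonempty {n | ∃ X : Finset (Sym2 V), IsMulticut G R X ∧ X.card = n} :=
    ⟨_, G.edgeFinset, hmc0, rfl⟩
  obtain ⟨X, hX, hXcard⟩ := Nat.sInf_mem hMne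
  have hXmin : ∀ Y : Finset (Sym2 V), IsMulticut G R Y → X.card ≤ Y.card := by
    intro Y hY
    rw [hXcard]
    exact Nat.sInf_le ⟨Y, hY, rfl⟩
  set XS := X ∩ GS.edgeFinset with hXSdef
  set Xout := X \ GS.edgeFinset with hXoutdef
  -- the induced cut requests on the recursive instance
  set R' : Set (Sym2 V) := {r | ¬ r.IsDiag ∧ (∀ x ∈ r, x ∈ (↑TS : Set V)) ∧
      ∀ a b : V, r = s(a, b) → ¬ (GS.deleteEdges ↑XS).Reachable a b} with hR'def
  have hR' : CutRequests (↑TS) R' := fun r hr => ⟨hr.1, hr.2.1⟩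
  have hXSmc : IsMulticut GS R' XS := by
    constructor
    · intro x hx
      rw [Finset.mem_coe, hXSdef, Finset.mem_inter] at hx
      exact SimpleGraph.mem_edgeFinset.mp hx.2
    · intro u v hr
      exact hr.2.2 u v rfl
  obtain ⟨Y, hYmin, hYZ⟩ := hZ.2 R' hR'
  have heY : e ∉ Y := fun h => heZ (hYZ h)
  have hYcard : Y.card ≤ XS.card := hYmin.2 XS hXSmc
  -- basic monotonicity facts
  have hGSle : GS ≤ G := fun u v h => h.1
  have hDel_le : GS.deleteEdges ↑XS ≤ G.deleteEdges ↑X := by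
    intro u v huv
    rw [SimpleGraph.deleteEdges_adj] at huv ⊢
    refine ⟨huv.1.1, fun hx => huv.2 ?_⟩
    rw [Finset.mem_coe, hXSdef, Finset.mem_inter]
    exact ⟨hx, SimpleGraph.mem_edgeFinset.mpr huv.1⟩
  -- Lemma A: terminals of the recursive instance reachable after Y are reachable after X
  have lemA : ∀ a b : V, a ∈ TS → b ∈ TS → (GS.deleteEdges ↑Y).Reachable a b →
      (G.deleteEdges ↑X).Reachable a b := by
    intro a b ha hb hr
    by_cases hab : a = b
    · subst hab; exact SimpleGraph.Reachable.refl _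
    have hnotR' : s(a, b) ∉ R' := fun hmem => hYmin.1.2 a b hmem hr
    have h1 : ¬ (s(a, b)).IsDiag := by simpa [Sym2.mk_isDiag_iff] using hab
    have h2 : ∀ x ∈ s(a, b), x ∈ (↑TS : Set V) := by
      intro x hx
      rw [Sym2.mem_iff] at hx
      rcases hx with rfl | rfl <;> simpa
    have h3 : ¬ ∀ a' b' : V, s(a, b) = s(a', b') → ¬ (GS.deleteEdges ↑XS).Reachable a' b' := by
      intro h3'
      exact hnotR' ⟨h1, h2, h3'⟩
    push_neg at h3
    obtain ⟨a', b', heq, hr'⟩ := h3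
    have hreach : (GS.deleteEdges ↑XS).Reachable a b := by
      rcases Sym2.eq_iff.mp heq with ⟨rfl, rfl⟩ | ⟨rfl, rfl⟩
      · exact hr'
      · exact hr'.symm
    exact hreach.mono hDel_le
  -- vertices outside S incident to an edge of G_S are in N(S) ⊆ T(S)
  have memTS : ∀ a b : V, a ∉ S → (GS.deleteEdges ↑Y).Adj a b → a ∈ TS := by
    intro a b haS hadj
    rw [SimpleGraph.deleteEdges_adj] at hadj
    obtain ⟨⟨hGadj, hor⟩, -⟩ := hadj
    have hbS : b ∈ S := hor.resolve_left haS
    rw [hTSdef, recTerminals, Finset.mem_union]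
    right
    rw [extNbhd, Finset.mem_filter]
    exact ⟨Finset.mem_univ a, haS, b, hbS, hGadj.symm⟩
  -- Lemma C
  have lemC : ∀ a b : V, (a ∈ S → a ∈ TS) → (b ∈ S → b ∈ TS) →
      (GS.deleteEdges ↑Y).Reachable a b → (G.deleteEdges ↑X).Reachable a b := by
    intro a b ha hb hr
    by_cases hab : a = b
    · subst hab; exact SimpleGraph.Reachable.refl _
    have haTS : a ∈ TS := by
      by_cases haS : a ∈ S
      · exact ha haS
      · obtain ⟨w⟩ := hr
        cases w with
        | nil => exact absurd rfl hab
        | cons h _ => exact memTS _ _ haS h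
    have hbTS : b ∈ TS := by
      by_cases hbS : b ∈ S
      · exact hb hbS
      · obtain ⟨w⟩ := hr.symm
        cases w with
        | nil => exact absurd rfl (Ne.symm hab)
        | cons h _ => exact memTS _ _ hbS h
    exact lemA a b haTS hbTS hr
  -- main walk-splitting argument
  have main : ∀ a v : V, (G.deleteEdges ↑(Xout ∪ Y)).Walk a v → (v ∈ S → v ∈ TS) →
      ∃ c : V, (c ∈ S → c ∈ TS) ∧ (GS.deleteEdges ↑Y).Reachable a c ∧
        (G.deleteEdges ↑X).Reachable c v := by
    intro a v w
    induction w with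
    | nil => exact fun hv => ⟨_, hv, SimpleGraph.Reachable.refl _, SimpleGraph.Reachable.refl _⟩
    | @cons a b v h p ih =>
      intro hv
      obtain ⟨c, hc, hbc, hcv⟩ := ih hv
      rw [SimpleGraph.deleteEdges_adj] at h
      obtain ⟨hadj, hnot⟩ := h
      rw [Finset.mem_coe, Finset.mem_union] at hnot
      push_neg at hnot
      by_cases hS : a ∈ S ∨ b ∈ S
      · have hadjY : (GS.deleteEdges ↑Y).Adj a b := by
          rw [SimpleGraph.deleteEdges_adj]
          exact ⟨⟨hadj, hS⟩, fun hy => hnot.2 (Finset.mem_coe.mp hy)⟩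
        exact ⟨c, hc, hadjY.reachable.trans hbc, hcv⟩
      · push_neg at hS
        have hXab : s(a, b) ∉ X := by
          intro hx
          refine hnot.1 ?_
          rw [hXoutdef, Finset.mem_sdiff]
          refine ⟨hx, fun hGSe => ?_⟩
          have : GS.Adj a b := SimpleGraph.mem_edgeFinset.mp hGSe
          exact absurd this.2 (by push_neg; exact hS)
        have hadjX : (G.deleteEdges ↑X).Adj a b := by
          rw [SimpleGraph.deleteEdges_adj]
          exact ⟨hadj, hXab⟩
        have hbv : (G.deleteEdges ↑X).Reachable b v :=
          (lemC b c (fun h' => absurd h' hS.2) hc hbc).trans hcv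
        exact ⟨a, fun h' => absurd h' hS.1, SimpleGraph.Reachable.refl _,
          hadjX.reachable.trans hbv⟩
  -- terminals of T in S are terminals of the recursive instance
  have hTmemTS : ∀ u : V, u ∈ T → u ∈ S → u ∈ TS := by
    intro u hu huS
    rw [hTSdef, recTerminals, Finset.mem_union]
    exact Or.inl (Finset.mem_inter.mpr ⟨hu, huS⟩)
  -- (Xout ∪ Y) is a multicut for R in G
  have hX'mc : IsMulticut G R (Xout ∪ Y) := by
    constructor
    · intro x hx
      rw [Finset.coe_union, Set.mem_union] at hx
      rcases hx with hx | hx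
      · exact hX.1 (by
          rw [Finset.mem_coe] at hx ⊢
          exact Finset.mem_sdiff.mp hx |>.1)
      · exact SimpleGraph.edgeSet_mono hGSle (hYmin.1.1 hx)
    · intro u v hr hreach
      have hu : u ∈ T := by
        have := (hR _ hr).2 u (by rw [Sym2.mem_iff]; left; rfl)
        exact Finset.mem_coe.mp this
      have hv : v ∈ T := by
        have := (hR _ hr).2 v (by rw [Sym2.mem_iff]; right; rfl)
        exact Finset.mem_coe.mp this
      obtain ⟨w⟩ := hreach
      obtain ⟨c, hc, huc, hcv⟩ := main u v w (hTmemTS v hv)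
      exact hX.2 u v hr ((lemC u c (hTmemTS u hu) hc huc).trans hcv)
  -- cardinality
  have hcard : (Xout ∪ Y).card ≤ X.card := by
    calc (Xout ∪ Y).card ≤ Xout.card + Y.card := Finset.card_union_le _ _
      _ ≤ Xout.card + XS.card := Nat.add_le_add_left hYcard _
      _ = X.card := Finset.card_sdiff_add_card_inter X GS.edgeFinset
  have heX' : e ∉ Xout ∪ Y := by
    rw [Finset.mem_union]
    rintro (h | h)
    · exact (Finset.mem_sdiff.mp h).2 (SimpleGraph.mem_edgeFinset.mpr he)
    · exact heY h
  exact ⟨Xout ∪ Y, ⟨hX'mc, fun Y' hY' => hcard.trans (hXmin Y' hY')⟩, heX'⟩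
end

section
/- Let (G,T) be a terminal network with k = cap_G(T), let 𝒯 be a partition of T, and let X be a minimum multiway cut for 𝒯 in G. Let V = V_1 ∪ … ∪ V_s be the partition of V into the vertex sets of the connected components of G−X, ordered so that cap_T(V_1) ≥ cap_T(V_2) ≥ … ≥ cap_T(V_s). Then for every i ∈ [s], cap_T(V_i) ≤ 3k/i. -/
open Finset

variable {V : Type}

/-- Auxiliary: the terminal edges form a multiway cut. -/
lemma terminalEdges_isMultiwayCut [Fintype V] [DecidableEq V]
    (G : SimpleGraph V) [DecidableRel G.Adj] (T : Finset V)
    (P : Set (Set V)) (hP : IsPartitionOn (↑T) P) :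
    IsMultiwayCut G P (terminalEdges G T) := by
  constructor
  · intro e he
    rw [Finset.mem_coe, terminalEdges, Finset.mem_filter] at he
    exact SimpleGraph.mem_edgeFinset.mp he.1
  · intro u v p hp q hq hu hv hr
    have huT : u ∈ (T : Set V) := (hP.1 p hp).2 hu
    have huv : u = v := by
      obtain ⟨w⟩ := hr
      cases w with
      | nil => rfl
      | cons hadj _ =>
        rw [SimpleGraph.deleteEdges_adj] at hadj
        exfalso
        apply hadj.2
        rw [Finset.mem_coe, terminalEdges, Finset.mem_filter]
        exact ⟨SimpleGraph.mem_edgeFinset.mpr hadj.1, u, huT, Sym2.mem_mk_left _ _⟩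
    subst huv
    obtain ⟨r, -, hr'⟩ := hP.2 u huT
    exact (hr' p ⟨hp, hu⟩).trans (hr' q ⟨hq, hv⟩).symm

/-- Auxiliary: the number of terminal edges is at most the total capacity. -/
lemma terminalEdges_card_le [Fintype V] [DecidableEq V]
    (G : SimpleGraph V) [DecidableRel G.Adj] (T : Finset V) :
    (terminalEdges G T).card ≤ capacity G T := by
  have hsub : terminalEdges G T ⊆ T.biUnion (fun t => G.incidenceFinset t) := by
    intro e he
    rw [terminalEdges, Finset.mem_filter] at he
    obtain ⟨heE, t, htT, hte⟩ := he
    refine Finset.mem_biUnion.mpr ⟨t, htT, ?_⟩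
    rw [SimpleGraph.mem_incidenceFinset]
    exact ⟨SimpleGraph.mem_edgeFinset.mp heE, hte⟩
  calc (terminalEdges G T).card ≤ (T.biUnion (fun t => G.incidenceFinset t)).card :=
        Finset.card_le_card hsub
    _ ≤ ∑ t ∈ T, (G.incidenceFinset t).card := Finset.card_biUnion_le
    _ = capacity G T := Finset.sum_congr rfl fun t _ => G.card_incidenceFinset_eq_degree t

/-- Let `X` be a minimum multiway cut for a partition `𝒯` of `T`,
and let `V_1, …, V_s` enumerate the vertex sets of the connected components of
`G − X`, ordered so that `cap_T(V_i)` is non-increasing.  Then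
`cap_T(V_i) ≤ 3k/i` for all `i`, i.e. `i · cap_T(V_i) ≤ 3k` (1-indexed). -/
theorem component_capacity_decay [Fintype V] [DecidableEq V]
    (G : SimpleGraph V) [DecidableRel G.Adj] (T : Finset V)
    (P : Set (Set V)) (hP : IsPartitionOn (↑T) P)
    (X : Finset (Sym2 V)) (hX : IsMinMultiwayCut G P X)
    {s : ℕ} (Vc : Fin s → Finset V)
    (hcomp : ∀ i, ∃ v : V, ∀ u : V, u ∈ Vc i ↔ (G.deleteEdges ↑X).Reachable u v)
    (hcover : ∀ v : V, ∃! i, v ∈ Vc i)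
    (hmono : ∀ i j : Fin s, i ≤ j → capT G T (Vc j) ≤ capT G T (Vc i)) :
    ∀ i : Fin s, ((i : ℕ) + 1) * capT G T (Vc i) ≤ 3 * capacity G T := by
  classical
  choose idx h using hcover
  have hmemiff : ∀ (v : V) (j : Fin s), v ∈ Vc j ↔ idx v = j := by
    intro v j
    constructor
    · exact fun hv => ((h v).2 j hv).symm
    · rintro rfl; exact (h v).1
  -- components are closed under reachability in G - X
  have hclosed : ∀ (j : Fin s) (u v : V), u ∈ Vc j →
      (G.deleteEdges ↑X).Reachable v u → v ∈ Vc j := by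
    intro j u v hu hr
    obtain ⟨w, hw⟩ := hcomp j
    exact (hw v).2 (hr.trans ((hw u).1 hu))
  -- boundary edges of components lie in X
  have hBsub : ∀ j : Fin s, edgeBoundary G (Vc j) ⊆ X := by
    intro j e he
    rw [edgeBoundary, Finset.mem_filter] at he
    obtain ⟨heE, u, v, rfl, hu, hv⟩ := he
    by_contra hex
    have hadj : (G.deleteEdges ↑X).Adj u v := by
      rw [SimpleGraph.deleteEdges_adj]
      exact ⟨SimpleGraph.mem_edgeFinset.mp heE, hex⟩
    exact hv (hclosed j u v hu hadj.symm.reachable)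
  -- terminal capacities of components sum to the total capacity
  have hcapsum : ∑ j : Fin s, capacity G (T ∩ Vc j) = capacity G T := by
    have hsplit : ∀ j : Fin s, T ∩ Vc j = T.filter (fun v => idx v = j) := by
      intro j; ext v
      simp only [Finset.mem_inter, Finset.mem_filter, hmemiff]
    calc ∑ j : Fin s, capacity G (T ∩ Vc j)
        = ∑ j : Fin s, ∑ t ∈ T.filter (fun v => idx v = j), G.degree t := by
          refine Finset.sum_congr rfl fun j _ => ?_
          rw [capacity, hsplit]
      _ = ∑ t ∈ T, G.degree t := Finset.sum_fiberwise T idx (fun t => G.degree t)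
      _ = capacity G T := rfl
  -- each edge is in at most two component boundaries
  have hfiber : ∀ e : Sym2 V,
      ((Finset.univ : Finset (Fin s)).filter
        (fun j => e ∈ edgeBoundary G (Vc j))).card ≤ 2 := by
    intro e
    induction e using Sym2.inductionOn with
    | hf u v =>
      have hsub : (Finset.univ.filter (fun j => s(u,v) ∈ edgeBoundary G (Vc j)))
          ⊆ {idx u, idx v} := by
        intro j hj
        rw [Finset.mem_filter, edgeBoundary, Finset.mem_filter] at hj
        obtain ⟨-, -, a, b, hab, ha, hb⟩ := hj
        rw [Sym2.eq_iff] at hab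
        simp only [Finset.mem_insert, Finset.mem_singleton]
        rcases hab with ⟨rfl, rfl⟩ | ⟨rfl, rfl⟩
        · exact Or.inl ((hmemiff u j).mp ha).symm
        · exact Or.inr ((hmemiff v j).mp ha).symm
      calc _ ≤ ({idx u, idx v} : Finset (Fin s)).card := Finset.card_le_card hsub
        _ ≤ ({idx v} : Finset (Fin s)).card + 1 := Finset.card_insert_le _ _
        _ ≤ 2 := by simp
  -- boundary cardinalities sum to at most 2|X|
  have hbsum : ∑ j : Fin s, (edgeBoundary G (Vc j)).card ≤ 2 * X.card := by
    have h1 : ∀ j : Fin s, (edgeBoundary G (Vc j)).card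
        = (X.filter (fun e => e ∈ edgeBoundary G (Vc j))).card := by
      intro j
      rw [Finset.filter_mem_eq_inter, Finset.inter_eq_right.mpr (hBsub j)]
    calc ∑ j : Fin s, (edgeBoundary G (Vc j)).card
        = ∑ j : Fin s, ∑ e ∈ X, if e ∈ edgeBoundary G (Vc j) then 1 else 0 := by
          refine Finset.sum_congr rfl fun j _ => ?_
          rw [h1 j, Finset.card_filter]
      _ = ∑ e ∈ X, ∑ j : Fin s, if e ∈ edgeBoundary G (Vc j) then 1 else 0 :=
          Finset.sum_comm
      _ = ∑ e ∈ X, (Finset.univ.filter (fun j => e ∈ edgeBoundary G (Vc j))).card := by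
          refine Finset.sum_congr rfl fun e _ => ?_
          rw [Finset.card_filter]
      _ ≤ ∑ _e ∈ X, 2 := Finset.sum_le_sum fun e _ => hfiber e
      _ = 2 * X.card := by rw [Finset.sum_const, smul_eq_mul, Nat.mul_comm]
  -- |X| ≤ k by minimality, comparing to the terminal-edge cut
  have hXcard : X.card ≤ capacity G T :=
    (hX.2 _ (terminalEdges_isMultiwayCut G T P hP)).trans (terminalEdges_card_le G T)
  -- total bound
  have htotal : ∑ j : Fin s, capT G T (Vc j) ≤ 3 * capacity G T := by
    calc ∑ j : Fin s, capT G T (Vc j)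
        = ∑ j : Fin s, capacity G (T ∩ Vc j) + ∑ j : Fin s, (edgeBoundary G (Vc j)).card := by
          rw [← Finset.sum_add_distrib]; rfl
      _ ≤ capacity G T + 2 * X.card := by rw [hcapsum]; exact Nat.add_le_add_left hbsum _
      _ ≤ capacity G T + 2 * capacity G T := by
          exact Nat.add_le_add_left (Nat.mul_le_mul_left 2 hXcard) _
      _ = 3 * capacity G T := by ring
  intro i
  calc ((i : ℕ) + 1) * capT G T (Vc i)
      = ∑ _j ∈ Finset.Iic i, capT G T (Vc i) := by
        rw [Finset.sum_const, Fin.card_Iic, smul_eq_mul]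
    _ ≤ ∑ j ∈ Finset.Iic i, capT G T (Vc j) :=
        Finset.sum_le_sum fun j hj => hmono j i (Finset.mem_Iic.mp hj)
    _ ≤ ∑ j : Fin s, capT G T (Vc j) :=
        Finset.sum_le_sum_of_subset (Finset.subset_univ _)
    _ ≤ 3 * capacity G T := htotal
end

section
/- Let (G,T) be a terminal network with k = cap_G(T), let 𝒯 be a partition of T, and let X be a minimum multiway cut for 𝒯 in G. Let V_1,…,V_s be the vertex sets of the connected components of G−X. Then Σ_{i=1}^s cap_T(V_i) ≤ 3k. -/
open Finset

variable {V : Type}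

/-- Let `X` be a minimum multiway cut for a partition `𝒯` of `T`,
and let `V_1, …, V_s` enumerate the vertex sets of the connected components of
`G − X`.  Then `Σ_i cap_T(V_i) ≤ 3k` where `k = cap_G(T)`. -/
theorem sum_component_capacities_le [Fintype V] [DecidableEq V]
    (G : SimpleGraph V) [DecidableRel G.Adj] (T : Finset V)
    (P : Set (Set V)) (hP : IsPartitionOn (↑T) P)
    (X : Finset (Sym2 V)) (hX : IsMinMultiwayCut G P X)
    {s : ℕ} (Vc : Fin s → Finset V)
    (hcomp : ∀ i, ∃ v : V, ∀ u : V, u ∈ Vc i ↔ (G.deleteEdges ↑X).Reachable u v)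
    (hcover : ∀ v : V, ∃! i, v ∈ Vc i) :
    ∑ i, capT G T (Vc i) ≤ 3 * capacity G T := by
  obtain ⟨⟨hXsub, hXcut⟩, hXmin⟩ := hX
  -- Part C: |X| ≤ capacity G T
  have hYcut : IsMultiwayCut G P (terminalEdges G T) := by
    constructor
    · intro e he
      rw [Finset.mem_coe, terminalEdges, Finset.mem_filter] at he
      exact SimpleGraph.mem_edgeFinset.1 he.1
    · intro u v p hp q hq hu hv hr
      have hup : u ∈ T := (hP.1 p hp).2 hu
      have huv : u = v := by
        obtain ⟨w⟩ := hr
        cases w with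
        | nil => rfl
        | cons h w' =>
          rename_i x _
          rw [SimpleGraph.deleteEdges_adj] at h
          exfalso
          apply h.2
          rw [Finset.mem_coe, terminalEdges, Finset.mem_filter]
          refine ⟨SimpleGraph.mem_edgeFinset.2 h.1, u, hup, ?_⟩
          simp
      obtain ⟨r, hr', huniq⟩ := hP.2 u hup
      exact (huniq p ⟨hp, hu⟩).trans (huniq q ⟨hq, huv ▸ hv⟩).symm
  have hXk : X.card ≤ capacity G T := by
    refine le_trans (hXmin _ hYcut) ?_
    have hsub : terminalEdges G T ⊆ T.biUnion (fun t => G.incidenceFinset t) := by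
      intro e he
      rw [terminalEdges, Finset.mem_filter] at he
      obtain ⟨heE, t, ht, hte⟩ := he
      exact Finset.mem_biUnion.2 ⟨t, ht, by
        rw [SimpleGraph.mem_incidenceFinset]
        exact ⟨SimpleGraph.mem_edgeFinset.1 heE, hte⟩⟩
    calc (terminalEdges G T).card ≤ (T.biUnion (fun t => G.incidenceFinset t)).card :=
          Finset.card_le_card hsub
      _ ≤ ∑ t ∈ T, (G.incidenceFinset t).card := Finset.card_biUnion_le
      _ = capacity G T := by
          unfold capacity
          refine Finset.sum_congr rfl fun t _ => ?_
          exact G.card_incidenceFinset_eq_degree t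
  -- Part A
  have hA : ∑ i, capacity G (T ∩ Vc i) = capacity G T := by
    unfold capacity
    have h1 : ∀ i : Fin s, ∑ t ∈ T ∩ Vc i, G.degree t
        = ∑ t ∈ T, if t ∈ Vc i then G.degree t else 0 := by
      intro i
      rw [← Finset.sum_filter, Finset.filter_mem_eq_inter]
    simp_rw [h1]
    rw [Finset.sum_comm]
    refine Finset.sum_congr rfl fun t _ => ?_
    obtain ⟨i0, hi0, huniq⟩ := hcover t
    rw [Finset.sum_eq_single i0]
    · simp [hi0]
    · intro j _ hj
      simp only [ite_eq_right_iff]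
      intro hjt
      exact absurd (huniq j hjt) hj
    · simp
  -- boundaries are contained in X
  have hBsub : ∀ i, edgeBoundary G (Vc i) ⊆ X := by
    intro i e he
    rw [edgeBoundary, Finset.mem_filter] at he
    obtain ⟨heE, u, v, rfl, hu, hv⟩ := he
    by_contra hex
    have hadj : (G.deleteEdges ↑X).Adj u v := by
      rw [SimpleGraph.deleteEdges_adj]
      exact ⟨SimpleGraph.mem_edgeFinset.1 heE, fun h => hex h⟩
    obtain ⟨w, hw⟩ := hcomp i
    exact hv ((hw v).2 (hadj.symm.reachable.trans ((hw u).1 hu)))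
  -- Part B: ∑ boundary cards ≤ 2 |X|
  have hB : ∑ i, (edgeBoundary G (Vc i)).card ≤ 2 * X.card := by
    have h1 : ∀ i : Fin s, (edgeBoundary G (Vc i)).card
        = ∑ e ∈ X, if e ∈ edgeBoundary G (Vc i) then 1 else 0 := by
      intro i
      rw [← Finset.card_filter, Finset.filter_mem_eq_inter,
        Finset.inter_eq_right.2 (hBsub i)]
    simp_rw [h1]
    rw [Finset.sum_comm]
    calc ∑ e ∈ X, ∑ i : Fin s, (if e ∈ edgeBoundary G (Vc i) then 1 else 0)
        ≤ ∑ _e ∈ X, 2 := by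
          refine Finset.sum_le_sum fun e heX => ?_
          induction e using Sym2.ind with
          | _ u v =>
            rw [← Finset.card_filter]
            obtain ⟨iu, hiu, huu⟩ := hcover u
            obtain ⟨iv, hiv, hvv⟩ := hcover v
            refine le_trans (Finset.card_le_card (?_ : _ ⊆ ({iu, iv} : Finset (Fin s)))) ?_
            · intro i hi
              rw [Finset.mem_filter, edgeBoundary, Finset.mem_filter] at hi
              obtain ⟨-, -, a, b, hab, ha, hb⟩ := hi
              rw [Sym2.eq_iff] at hab
              rcases hab with ⟨rfl, rfl⟩ | ⟨rfl, rfl⟩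
              · simp [huu i ha]
              · simp [hvv i ha]
            · exact le_trans (Finset.card_insert_le _ _) (by simp)
      _ = 2 * X.card := by rw [Finset.sum_const, smul_eq_mul, mul_comm]
  -- combine
  have : ∑ i, capT G T (Vc i)
      = (∑ i, capacity G (T ∩ Vc i)) + ∑ i, (edgeBoundary G (Vc i)).card := by
    unfold capT
    rw [Finset.sum_add_distrib]
  rw [this, hA]
  calc capacity G T + ∑ i, (edgeBoundary G (Vc i)).card
      ≤ capacity G T + 2 * X.card := Nat.add_le_add_left hB _
    _ ≤ capacity G T + 2 * capacity G T := Nat.add_le_add_left (Nat.mul_le_mul_left 2 hXk) _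
    _ = 3 * capacity G T := by ring
end

section
/- Let M = (E, ℐ) be the disjoint union of c matroids M_1,…,M_c on pairwise disjoint ground sets E_1,…,E_c, all representable over a common field, where M_i has rank r_i. Let 𝒴 be a collection of c-element independent sets of M such that every Y ∈ 𝒴 contains exactly one element of each E_i. Then there exists a subfamily 𝒴̂ ⊆ 𝒴 with |𝒴̂| ≤ r_1·r_2·…·r_c that represents 𝒴 in M. -/
open Finset

variable {V : Type}

section RepAux

variable {F : Type} [Field F] {c : ℕ}
  {E : Fin c → Type} [∀ i, Fintype (E i)] [∀ i, DecidableEq (E i)]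
  {W : Fin c → Type} [∀ i, AddCommGroup (W i)] [∀ i, Module F (W i)]

/-- The layer of a finset of the sigma type at index `i`. -/
def layerSet (Z : Finset (Σ i, E i)) (i : Fin c) : Finset (E i) :=
  Finset.univ.filter (fun e => (⟨i, e⟩ : Σ i, E i) ∈ Z)

lemma mem_layerSet {Z : Finset (Σ i, E i)} {i : Fin c} {e : E i} :
    e ∈ layerSet Z i ↔ (⟨i, e⟩ : Σ i, E i) ∈ Z := by
  simp [layerSet]

lemma layerSet_union (Z₁ Z₂ : Finset (Σ i, E i)) (i : Fin c) :
    layerSet (Z₁ ∪ Z₂) i = layerSet Z₁ i ∪ layerSet Z₂ i := by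
  ext e; simp [mem_layerSet]

lemma layerSet_image (g : ∀ i, E i) (i : Fin c) :
    layerSet (Finset.univ.image fun j => (⟨j, g j⟩ : Σ i, E i)) i = {g i} := by
  ext e
  simp only [mem_layerSet, Finset.mem_image, Finset.mem_univ, true_and, Finset.mem_singleton]
  constructor
  · rintro ⟨j, hj⟩
    have h1 : j = i := congrArg Sigma.fst hj
    subst h1
    exact (sigma_mk_injective hj).symm
  · rintro rfl
    exact ⟨i, rfl⟩

lemma block_findep_iff (vv : ∀ i, E i → W i) (Z : Finset (Σ i, E i)) :
    LinearIndependent F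
        (fun x : {a // a ∈ Z} => Pi.single x.1.1 (vv x.1.1 x.1.2)) ↔
      ∀ i, LinearIndependent F
        (fun e : ↥((layerSet Z i : Finset (E i)) : Set (E i)) => vv i e.1) := by
  constructor
  · intro h i
    have jinj : Function.Injective
        (fun e : ↥((layerSet Z i : Finset (E i)) : Set (E i)) =>
          (⟨⟨i, e.1⟩, mem_layerSet.1 e.2⟩ : {a // a ∈ Z})) := by
      intro a b hab
      have := congrArg Subtype.val hab
      exact Subtype.ext (sigma_mk_injective this)
    have h2 := h.comp _ jinj
    exact LinearIndependent.of_comp (LinearMap.single F W i)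
      (by simpa [Function.comp_def] using h2)
  · intro h
    have key := linearIndependent_iUnion_finite (R := F)
      (ιs := fun i => ↥((layerSet Z i : Finset (E i)) : Set (E i)))
      (f := fun i e => Pi.single i (vv i e.1))
      (fun i => by
        have := (h i).map' (LinearMap.single F W i) (LinearMap.ker_single F W i)
        simpa [Function.comp_def] using this)
      (by
        intro i t _ hit
        have hbase : Disjoint (LinearMap.range (LinearMap.single F W i))
            (LinearMap.ker (LinearMap.proj (R := F) (φ := W) i)) := by
          rw [Submodule.disjoint_def]
          rintro x ⟨w, rfl⟩ hx2
          have hw : w = 0 := by simpa using hx2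
          simp [hw]
        refine Disjoint.mono ?_ ?_ hbase
        · rw [Submodule.span_le]
          rintro _ ⟨e, rfl⟩
          exact ⟨vv i e.1, by simp⟩
        · refine iSup_le fun j => iSup_le fun hj => ?_
          rw [Submodule.span_le]
          rintro _ ⟨e, rfl⟩
          have hji : j ≠ i := fun hh => hit (hh ▸ hj)
          simp [LinearMap.mem_ker, Pi.single_eq_of_ne (Ne.symm hji)])
    have σinj : Function.Injective
        (fun x : {a // a ∈ Z} =>
          (⟨x.1.1, ⟨x.1.2, mem_layerSet.2 x.2⟩⟩ :
            Σ i, ↥((layerSet Z i : Finset (E i)) : Set (E i)))) := by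
      intro a b hab
      apply Subtype.ext
      exact congrArg (fun p : Σ i, ↥((layerSet Z i : Finset (E i)) : Set (E i)) =>
        (⟨p.1, p.2.1⟩ : Σ i, E i)) hab
    have h3 := key.comp _ σinj
    simpa [Function.comp_def] using h3

omit [∀ i, Fintype (E i)] in
lemma exists_layer_chooser (Y : Finset (Σ i, E i))
    (hf : ∀ i : Fin c, (Y.filter (fun x => x.1 = i)).card = 1) :
    ∃ g : ∀ i, E i, Y = Finset.univ.image fun j => (⟨j, g j⟩ : Σ i, E i) := by
  have h1 : ∀ i : Fin c, ∃ e : E i, Y.filter (fun x => x.1 = i) = {⟨i, e⟩} := by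
    intro i
    obtain ⟨a, ha⟩ := Finset.card_eq_one.1 (hf i)
    have hmem : a ∈ Y.filter (fun x => x.1 = i) := ha ▸ Finset.mem_singleton_self a
    have h2 : a.1 = i := (Finset.mem_filter.1 hmem).2
    subst h2
    exact ⟨a.2, ha⟩
  choose g hg using h1
  refine ⟨g, ?_⟩
  ext x
  simp only [Finset.mem_image, Finset.mem_univ, true_and]
  constructor
  · intro hx
    have hx2 : x ∈ Y.filter (fun z => z.1 = x.1) := Finset.mem_filter.2 ⟨hx, rfl⟩
    rw [hg x.1] at hx2
    exact ⟨x.1, (Finset.mem_singleton.1 hx2).symm⟩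
  · rintro ⟨j, rfl⟩
    have hj : (⟨j, g j⟩ : Σ i, E i) ∈ Y.filter (fun z => z.1 = j) := by
      rw [hg j]; exact Finset.mem_singleton_self _
    exact (Finset.mem_filter.1 hj).1

end RepAux

/-- product form of the representative sets lemma.  Let `M` be the
disjoint union of `c` matroids `M_i` of rank `r_i`, all representable over a common
field `F` (via vectors `v i : E i → W i`; the disjoint union is represented by the
block-diagonal vectors `x ↦ Pi.single x.1 (v x.1 x.2)` on the sigma type).  If every
`Y ∈ 𝒴` is a `c`-element independent set containing exactly one element of each
layer, then some subfamily `𝒴' ⊆ 𝒴` with `|𝒴'| ≤ r_1 ⋯ r_c` represents `𝒴`. -/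
theorem representative_sets_product_form
    (F : Type) [Field F] (c : ℕ)
    (E : Fin c → Type) [∀ i, Fintype (E i)] [∀ i, DecidableEq (E i)]
    (W : Fin c → Type) [∀ i, AddCommGroup (W i)] [∀ i, Module F (W i)]
    (vv : ∀ i, E i → W i) (r : Fin c → ℕ)
    (hrank : ∀ i, Module.finrank F (Submodule.span F (Set.range (vv i))) = r i)
    (𝒴 : Finset (Finset (Σ i, E i)))
    (h𝒴 : ∀ Y ∈ 𝒴, Y.card = c ∧
      FIndep F (fun x : Σ i, E i => Pi.single x.1 (vv x.1 x.2)) Y ∧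
      ∀ i : Fin c, (Y.filter (fun x => x.1 = i)).card = 1) :
    ∃ 𝒴' ⊆ 𝒴, 𝒴'.card ≤ ∏ i, r i ∧
      ∀ X : Finset (Σ i, E i),
        FIndep F (fun x : Σ i, E i => Pi.single x.1 (vv x.1 x.2)) X →
        (∃ Y ∈ 𝒴, Disjoint X Y ∧
          FIndep F (fun x : Σ i, E i => Pi.single x.1 (vv x.1 x.2)) (X ∪ Y)) →
        (∃ Y' ∈ 𝒴', Disjoint X Y' ∧
          FIndep F (fun x : Σ i, E i => Pi.single x.1 (vv x.1 x.2)) (X ∪ Y')) := by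
  classical
  haveI hFD : ∀ i, FiniteDimensional F (Submodule.span F (Set.range (vv i))) :=
    fun i => FiniteDimensional.span_of_finite F (Set.finite_range _)
  let Bas : ∀ i, Module.Basis (Fin (r i)) F (Submodule.span F (Set.range (vv i))) :=
    fun i => Module.finBasisOfFinrankEq F _ (hrank i)
  let uS : ∀ i, E i → Submodule.span F (Set.range (vv i)) :=
    fun i e => ⟨vv i e, Submodule.subset_span ⟨e, rfl⟩⟩
  let aC : ∀ i, E i → Fin (r i) → F := fun i e k => (Bas i).repr (uS i e) k
  let tvec : (∀ i, E i) → ((∀ i, Fin (r i)) → F) := fun g k => ∏ i, aC i (g i) (k i)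
  have hexp : ∀ (i : Fin c) (e : E i) (f : W i →ₗ[F] F),
      f (vv i e) = ∑ k, aC i e k * f ((Bas i k : W i)) := by
    intro i e f
    have h1 : ∑ k, aC i e k • ((Bas i k : Submodule.span F (Set.range (vv i))) : W i)
        = vv i e := by
      have h2 := congrArg (Subtype.val) ((Bas i).sum_repr (uS i e))
      simpa only [Submodule.coe_sum, Submodule.coe_smul] using h2
    rw [← h1, map_sum]
    simp [map_smul, smul_eq_mul]
  have hch : ∀ Y : {Y // Y ∈ 𝒴}, ∃ g : ∀ i, E i,
      Y.1 = Finset.univ.image fun j => (⟨j, g j⟩ : Σ i, E i) :=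
    fun Y => exists_layer_chooser Y.1 ((h𝒴 Y.1 Y.2).2.2)
  choose gY hgY using hch
  set s : Finset ((∀ i, Fin (r i)) → F) := 𝒴.attach.image (fun Y => tvec (gY Y)) with hs
  obtain ⟨b, hbs, hbspan, hbli⟩ :=
    exists_linearIndependent F ((s : Set ((∀ i, Fin (r i)) → F)))
  have hbf : b.Finite := s.finite_toSet.subset hbs
  have hvY : ∀ v ∈ hbf.toFinset, ∃ Y : {Y // Y ∈ 𝒴}, tvec (gY Y) = v := by
    intro v hv
    have hv2 : v ∈ s := hbs (hbf.mem_toFinset.1 hv)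
    rw [hs] at hv2
    obtain ⟨Y, _, hY⟩ := Finset.mem_image.1 hv2
    exact ⟨Y, hY⟩
  set 𝒴' : Finset (Finset (Σ i, E i)) :=
    hbf.toFinset.attach.image (fun v => ((hvY v.1 v.2).choose).1) with h𝒴'
  refine ⟨𝒴', ?_, ?_, ?_⟩
  · intro Y hY
    rw [h𝒴'] at hY
    obtain ⟨v, _, rfl⟩ := Finset.mem_image.1 hY
    exact ((hvY v.1 v.2).choose).2
  · haveI := hbf.fintype
    calc 𝒴'.card ≤ hbf.toFinset.attach.card := Finset.card_image_le
      _ = hbf.toFinset.card := Finset.card_attach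
      _ = Fintype.card b := hbf.card_toFinset
      _ ≤ Module.finrank F ((∀ i, Fin (r i)) → F) := hbli.fintype_card_le_finrank
      _ = ∏ i, r i := by
          rw [Module.finrank_pi]
          simp [Fintype.card_pi]
  · rintro X hX ⟨Y, hY𝒴, hdisjXY, hXY⟩
    have hLIX : ∀ i, LinearIndependent F
        (fun e : ↥((layerSet X i : Finset (E i)) : Set (E i)) => vv i e.1) :=
      (block_findep_iff vv X).1 hX
    set g := gY ⟨Y, hY𝒴⟩ with hgdef
    have hYim : Y = Finset.univ.image fun j => (⟨j, g j⟩ : Σ i, E i) := hgY ⟨Y, hY𝒴⟩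
    have hsetU : ∀ g' : ∀ i, E i, ∀ i : Fin c,
        ((layerSet (X ∪ Finset.univ.image fun j => (⟨j, g' j⟩ : Σ i, E i)) i
            : Finset (E i)) : Set (E i))
          = insert (g' i) ((layerSet X i : Finset (E i)) : Set (E i)) := by
      intro g' i
      rw [layerSet_union, layerSet_image, Finset.union_comm, ← Finset.insert_eq,
        Finset.coe_insert]
    have hnot : ∀ i, g i ∉ layerSet X i := by
      intro i hmem
      have hYmem : (⟨i, g i⟩ : Σ i, E i) ∈ Y := by
        rw [hYim]; exact Finset.mem_image.2 ⟨i, Finset.mem_univ _, rfl⟩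
      exact (Finset.disjoint_left.1 hdisjXY (mem_layerSet.1 hmem)) hYmem
    have hnspan : ∀ i, vv i (g i) ∉
        Submodule.span F (vv i '' ((layerSet X i : Finset (E i)) : Set (E i))) := by
      intro i
      have hU := (block_findep_iff vv (X ∪ Y)).1 hXY i
      rw [hYim] at hU
      rw [hsetU g i] at hU
      exact ((linearIndepOn_insert (a := g i) (f := vv i)
        (by simpa using hnot i)).1 hU).2
    have hdual : ∀ i, ∃ f : Module.Dual F (W i), f (vv i (g i)) ≠ 0 ∧
        (Submodule.span F (vv i '' ((layerSet X i : Finset (E i)) : Set (E i)))).map f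
          = ⊥ :=
      fun i => Submodule.exists_dual_map_eq_bot_of_notMem (hnspan i) inferInstance
    choose fd hfd1 hfd2 using hdual
    let ci : ∀ i, Fin (r i) → F := fun i k => fd i ((Bas i k : W i))
    let ℓ : ((∀ i, Fin (r i)) → F) →ₗ[F] F :=
      ∑ k : ∀ i, Fin (r i), (∏ i, ci i (k i)) • LinearMap.proj k
    have hℓ : ∀ w, ℓ w = ∑ k : ∀ i, Fin (r i), (∏ i, ci i (k i)) * w k := by
      intro w
      simp [ℓ, LinearMap.sum_apply, LinearMap.smul_apply, smul_eq_mul]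
    have hkey : ∀ g' : ∀ i, E i, ℓ (tvec g') = ∏ i, fd i (vv i (g' i)) := by
      intro g'
      rw [hℓ]
      have h4 : ∀ i : Fin c, fd i (vv i (g' i)) = ∑ k, aC i (g' i) k * ci i k :=
        fun i => hexp i (g' i) (fd i)
      rw [Finset.prod_congr rfl (fun i _ => h4 i),
        Fintype.prod_sum (f := fun (i : Fin c) k => aC i (g' i) k * ci i k)]
      apply Finset.sum_congr rfl
      intro k _
      rw [Finset.prod_mul_distrib]
      simp [tvec, mul_comm]
    have hw0 : ℓ (tvec g) ≠ 0 := by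
      rw [hkey]
      exact Finset.prod_ne_zero_iff.2 (fun i _ => hfd1 i)
    have hmemb : tvec g ∈ Submodule.span F b := by
      rw [hbspan]
      apply Submodule.subset_span
      rw [hs]
      exact Finset.mem_coe.2 (Finset.mem_image.2 ⟨⟨Y, hY𝒴⟩, Finset.mem_attach _ _, rfl⟩)
    have hexv : ∃ v ∈ b, ℓ v ≠ 0 := by
      by_contra hcon
      push_neg at hcon
      have hle : Submodule.span F b ≤ LinearMap.ker ℓ :=
        Submodule.span_le.2 (fun v hv => hcon v hv)
      exact hw0 (hle hmemb)
    obtain ⟨v, hvb, hv0⟩ := hexv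
    have hvfin : v ∈ hbf.toFinset := hbf.mem_toFinset.2 hvb
    have hYsv : tvec (gY (hvY v hvfin).choose) = v := (hvY v hvfin).choose_spec
    set Ys := (hvY v hvfin).choose with hYsdef
    set g' := gY Ys with hg'def
    have hYsim : Ys.1 = Finset.univ.image fun j => (⟨j, g' j⟩ : Σ i, E i) := hgY Ys
    have hfz : ∀ i, fd i (vv i (g' i)) ≠ 0 := by
      intro i hzero
      apply hv0
      rw [← hYsv, hkey]
      exact Finset.prod_eq_zero (Finset.mem_univ i) hzero
    have hns' : ∀ i, vv i (g' i) ∉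
        Submodule.span F (vv i '' ((layerSet X i : Finset (E i)) : Set (E i))) := by
      intro i hmem2
      apply hfz i
      have h5 : fd i (vv i (g' i)) ∈
          (Submodule.span F (vv i '' ((layerSet X i : Finset (E i)) : Set (E i)))).map
            (fd i) := Submodule.mem_map_of_mem hmem2
      rw [hfd2 i] at h5
      exact (Submodule.mem_bot F).1 h5
    have hg'not : ∀ i, g' i ∉ layerSet X i := by
      intro i hmem2
      exact hns' i (Submodule.subset_span ⟨g' i, by simpa using hmem2, rfl⟩)
    refine ⟨Ys.1, ?_, ?_, ?_⟩
    · rw [h𝒴']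
      exact Finset.mem_image.2 ⟨⟨v, hvfin⟩, Finset.mem_attach _ _, rfl⟩
    · rw [hYsim, Finset.disjoint_right]
      intro x hxY' hxX
      obtain ⟨j, _, rfl⟩ := Finset.mem_image.1 hxY'
      exact hg'not j (mem_layerSet.2 hxX)
    · rw [hYsim]
      apply (block_findep_iff vv _).2
      intro i
      rw [hsetU g' i]
      exact (linearIndepOn_insert (a := g' i) (f := vv i)
        (by simpa using hg'not i)).2 ⟨hLIX i, hns' i⟩
end
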